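/- Any nilpotent permutation group of degree n has order at most 2^(n-1). -/

import Mathlib

open Subgroup

theorem exists_center_ne_one {G : Type*} [Group G] [Group.IsNilpotent G] [Nontrivial G] :
    ∃ z : G, z ∈ Subgroup.center G ∧ z ≠ 1 := by
  by_contra h
  push_neg at h
  have hbot : Subgroup.center G = ⊥ := by
    rw [eq_bot_iff]
    intro z hz
    rw [Subgroup.mem_bot]
    by_contra hne
    exact hne (h z hz)
  have e : (G ⧸ Subgroup.center G) ≃* G :=
    (QuotientGroup.quotientMulEquivOfEq hbot).trans QuotientGroup.quotientBot
  have h1 : Group.nilpotencyClass (G ⧸ Subgroup.center G) = Group.nilpotencyClass G - 1 :=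
    nilpotencyClass_quotient_center
  have h2 : Group.nilpotencyClass G ≤ Group.nilpotencyClass (G ⧸ Subgroup.center G) :=
    nilpotencyClass_le_of_surjective e.toMonoidHom e.surjective
  have h3 : Group.nilpotencyClass G ≠ 0 := by
    intro h0
    rw [nilpotencyClass_zero_iff_subsingleton] at h0
    exact false_of_nontrivial_of_subsingleton G
  omega

open MulAction

variable {G α : Type*} [Group G] [MulAction G α]

/-- Restriction of the action of `G` to an invariant set, as a hom to the permutation group. -/
def restrictPermHom (O : Set α) (hO : ∀ (g : G) {x : α}, x ∈ O → g • x ∈ O) :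
    G →* Equiv.Perm O where
  toFun g :=
    { toFun := fun x => ⟨g • (x : α), hO g x.2⟩
      invFun := fun x => ⟨g⁻¹ • (x : α), hO g⁻¹ x.2⟩
      left_inv := fun x => by simp
      right_inv := fun x => by simp }
  map_one' := by ext x; simp
  map_mul' g h := by ext x; simp [mul_smul]

theorem restrictPermHom_apply (O : Set α) (hO : ∀ (g : G) {x : α}, x ∈ O → g • x ∈ O)
    (g : G) (x : O) : ((restrictPermHom O hO g x : O) : α) = g • (x : α) := rfl

-- the range acts on O; relation between orbits
theorem orbitRel_range_iff (O : Set α) (hO : ∀ (g : G) {x : α}, x ∈ O → g • x ∈ O)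
    (x y : O) :
    (y ∈ orbit ((restrictPermHom O hO).range) x) ↔ (y : α) ∈ orbit G (x : α) := by
  constructor
  · rintro ⟨⟨p, g, rfl⟩, rfl⟩
    exact ⟨g, rfl⟩
  · rintro ⟨g, hg⟩
    refine ⟨⟨restrictPermHom O hO g, g, rfl⟩, ?_⟩
    ext
    exact hg

theorem invariant_compl (O : Set α) (hO : ∀ (g : G) {x : α}, x ∈ O → g • x ∈ O) :
    ∀ (g : G) {x : α}, x ∈ Oᶜ → g • x ∈ Oᶜ := by
  intro g x hx hgx
  exact hx (by simpa using hO g⁻¹ hgx)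

theorem quot_card_le (O : Set α) (hO : ∀ (g : G) {x : α}, x ∈ O → g • x ∈ O) [Finite α] :
    Nat.card (orbitRel.Quotient G α) ≤
      Nat.card (orbitRel.Quotient ((restrictPermHom O hO).range) O) +
      Nat.card (orbitRel.Quotient ((restrictPermHom Oᶜ (invariant_compl O hO)).range)
        (Oᶜ : Set α)) := by
  classical
  rw [← Nat.card_sum]
  set H1 := (restrictPermHom O hO).range with hH1
  set H2 := (restrictPermHom Oᶜ (invariant_compl O hO)).range with hH2
  set f : α → (orbitRel.Quotient H1 O) ⊕ (orbitRel.Quotient H2 (Oᶜ : Set α)) :=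
    fun x => if h : x ∈ O then
        (Sum.inl (Quotient.mk'' ⟨x, h⟩ : orbitRel.Quotient H1 O))
      else (Sum.inr (Quotient.mk'' ⟨x, h⟩ : orbitRel.Quotient H2 (Oᶜ : Set α))) with hf
  have key : ∀ a b : α, (orbitRel G α) a b → f a = f b := by
    intro a b hab
    rw [orbitRel_apply] at hab
    obtain ⟨g, rfl⟩ := hab
    by_cases hb : b ∈ O
    · have ha : g • b ∈ O := hO g hb
      simp only [hf, ha, hb, dif_pos]
      congr 1
      rw [Quotient.eq'', orbitRel_apply, orbitRel_range_iff O hO]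
      exact ⟨g, rfl⟩
    · have ha : g • b ∈ Oᶜ := invariant_compl O hO g hb
      simp only [hf, hb, ha.out, dif_neg, not_false_iff]
      congr 1
      rw [Quotient.eq'', orbitRel_apply, orbitRel_range_iff Oᶜ (invariant_compl O hO)]
      exact ⟨g, rfl⟩
  apply Nat.card_le_card_of_injective (fun q => Quotient.liftOn' q f key)
  intro x y
  induction x using Quotient.inductionOn'
  induction y using Quotient.inductionOn'
  rename_i a b
  simp only [Quotient.liftOn'_mk'', hf]
  by_cases ha : a ∈ O <;> by_cases hb : b ∈ O <;> simp only [ha, hb, dif_pos, dif_neg,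
    not_false_iff, Sum.inl.injEq, Sum.inr.injEq, reduceCtorEq, imp_false] <;> intro h
  · rw [Quotient.eq'', orbitRel_apply, orbitRel_range_iff O hO] at h
    rw [Quotient.eq'', orbitRel_apply]
    exact h
  · exact h.elim
  · exact h.elim
  · rw [Quotient.eq'', orbitRel_apply, orbitRel_range_iff Oᶜ (invariant_compl O hO)] at h
    rw [Quotient.eq'', orbitRel_apply]
    exact h

theorem quot_card_eq_one (O : Set α) (hO : ∀ (g : G) {x : α}, x ∈ O → g • x ∈ O)
    (hne : O.Nonempty) (hT : ∀ x y : O, (y : α) ∈ orbit G (x : α)) :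
    Nat.card (orbitRel.Quotient ((restrictPermHom O hO).range) O) = 1 := by
  rw [Nat.card_eq_one_iff_unique]
  constructor
  · constructor
    intro x y
    induction x using Quotient.inductionOn'
    induction y using Quotient.inductionOn'
    rename_i a b
    rw [Quotient.eq'', orbitRel_apply, orbitRel_range_iff O hO]
    exact hT b a
  · exact ⟨Quotient.mk'' ⟨hne.choose, hne.choose_spec⟩⟩

theorem card_le_range_mul (O : Set α) (hO : ∀ (g : G) {x : α}, x ∈ O → g • x ∈ O)
    [Finite α] [FaithfulSMul G α] :
    Nat.card G ≤ Nat.card ((restrictPermHom O hO).range) *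
      Nat.card ((restrictPermHom Oᶜ (invariant_compl O hO)).range) := by
  classical
  rw [← Nat.card_prod]
  apply Nat.card_le_card_of_injective
    (fun g => ((⟨restrictPermHom O hO g, g, rfl⟩ : (restrictPermHom O hO).range),
      (⟨restrictPermHom Oᶜ (invariant_compl O hO) g, g, rfl⟩ :
        (restrictPermHom Oᶜ (invariant_compl O hO)).range)))
  intro g g' h
  simp only [Prod.mk.injEq, Subtype.mk.injEq] at h
  apply FaithfulSMul.eq_of_smul_eq_smul (α := α)
  intro x
  by_cases hx : x ∈ O
  · have := congrArg (fun p => ((p ⟨x, hx⟩ : O) : α)) (congrArg (fun q : (restrictPermHom O hO).range => (q : Equiv.Perm O).toFun) h.1)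
    exact this
  · have := congrArg (fun p => ((p ⟨x, hx⟩ : (Oᶜ : Set α)) : α)) (congrArg (fun q : (restrictPermHom Oᶜ (invariant_compl O hO)).range =>
      (q : Equiv.Perm (Oᶜ : Set α)).toFun) h.2)
    exact this

theorem card_range_le {G' : Type*} [Group G'] [Finite G] (f : G →* G') :
    Nat.card f.range ≤ Nat.card G :=
  Nat.card_le_card_of_surjective f.rangeRestrict f.rangeRestrict_surjective
open MulAction

variable {G α : Type*} [Group G] [MulAction G α]

private theorem central_resp (g : G) : ∀ a b : α,
    (orbitRel (Subgroup.center G) α) a b →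
    (orbitRel (Subgroup.center G) α) (g • a) (g • b) := by
  intro a b hab
  rw [orbitRel_apply] at hab ⊢
  obtain ⟨z, rfl⟩ := hab
  refine ⟨z, ?_⟩
  show (z : G) • g • b = g • (z : G) • b
  rw [← mul_smul, ← mul_smul, (Subgroup.mem_center_iff.mp z.2 g)]

/-- The action of `G` on the set of orbits of its center. -/
def centralBlockHom : G →* Equiv.Perm (orbitRel.Quotient (Subgroup.center G) α) where
  toFun g :=
    { toFun := Quotient.map' (g • ·) (central_resp g)
      invFun := Quotient.map' (g⁻¹ • ·) (central_resp g⁻¹)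
      left_inv := fun q => by
        induction q using Quotient.inductionOn'
        simp [Quotient.map'_mk'']
      right_inv := fun q => by
        induction q using Quotient.inductionOn'
        simp [Quotient.map'_mk''] }
  map_one' := by
    ext q
    induction q using Quotient.inductionOn'
    simp [Quotient.map'_mk'']
  map_mul' g h := by
    ext q
    induction q using Quotient.inductionOn'
    simp [Quotient.map'_mk'', mul_smul]

theorem centralBlockHom_apply (g : G) (a : α) :
    (centralBlockHom (α := α) g) (Quotient.mk'' a) = Quotient.mk'' (g • a) := rfl

theorem card_orbitQuot_eq_one {H β : Type*} [Group H] [MulAction H β] (hne : Nonempty β)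
    (hT : ∀ x y : β, ∃ h : H, h • x = y) :
    Nat.card (orbitRel.Quotient H β) = 1 := by
  rw [Nat.card_eq_one_iff_unique]
  refine ⟨⟨fun p q => ?_⟩, ⟨Quotient.mk'' hne.some⟩⟩
  induction p using Quotient.inductionOn'
  induction q using Quotient.inductionOn'
  rename_i a b
  rw [Quotient.eq'', orbitRel_apply]
  exact hT b a

theorem card_orbitQuot_le {H β : Type*} [Group H] [MulAction H β] [Finite β] :
    Nat.card (orbitRel.Quotient H β) ≤ Nat.card β :=
  Nat.card_le_card_of_surjective _ (fun q => Quotient.inductionOn' q (fun a => ⟨a, rfl⟩))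

theorem le_two_pow_pred (m : ℕ) : m ≤ 2 ^ (m - 1) := by
  cases m with
  | zero => simp
  | succ k => simpa using Nat.lt_two_pow_self (n := k)

theorem key (N : ℕ) : ∀ (α G : Type) [Group G] [Finite α] [MulAction G α] [FaithfulSMul G α],
    Group.IsNilpotent G → Nat.card α + Nat.card G ≤ N →
    Nat.card G ≤ 2 ^ (Nat.card α - Nat.card (orbitRel.Quotient G α)) := by
  induction N using Nat.strong_induction_on with
  | _ N IH =>
  intro α G _ _ _ _ hnil hle
  haveI : Group.IsNilpotent G := hnil
  haveI : Finite G := Finite.of_injective _ (MulAction.toPerm_injective (α := G) (β := α))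
  rcases subsingleton_or_nontrivial G with hG | hG
  · calc Nat.card G = 1 := Nat.card_eq_one_iff_unique.mpr ⟨inferInstance, ⟨1⟩⟩
      _ ≤ _ := Nat.one_le_two_pow
  have hα : Nonempty α := by
    by_contra h
    rw [not_nonempty_iff] at h
    have : Subsingleton G :=
      ⟨fun g g' => FaithfulSMul.eq_of_smul_eq_smul (fun x : α => (h.false x).elim)⟩
    exact (not_subsingleton_iff_nontrivial.mpr hG) this
  by_cases htrans : ∀ x y : α, ∃ g : G, g • x = y
  · -- transitive case
    have ht : Nat.card (orbitRel.Quotient G α) = 1 := card_orbitQuot_eq_one hα htrans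
    rw [ht]
    have hcomm : ∀ z ∈ Subgroup.center G, ∀ (g : G) (x : α), z • g • x = g • z • x := by
      intro z hz g x
      rw [← mul_smul, ← mul_smul, Subgroup.mem_center_iff.mp hz g]
    have hfree : ∀ z ∈ Subgroup.center G, ∀ x : α, z • x = x → z = 1 := by
      intro z hz x hx
      apply FaithfulSMul.eq_of_smul_eq_smul (α := α)
      intro y
      obtain ⟨g, rfl⟩ := htrans x y
      rw [one_smul, hcomm z hz g x, hx]
    obtain ⟨z0, hz0c, hz0⟩ := exists_center_ne_one (G := G)
    by_cases hZt : ∀ x y : α, ∃ z : Subgroup.center G, z • x = y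
    · -- center transitive: G regular, |G| = |α|
      obtain ⟨x⟩ := hα
      have hstab : ∀ g : G, g • x = x → g = 1 := by
        intro g hg
        apply FaithfulSMul.eq_of_smul_eq_smul (α := α)
        intro y
        obtain ⟨z, rfl⟩ := hZt x y
        rw [one_smul]
        show g • (z : G) • x = (z : G) • x
        rw [(hcomm z z.2 g x).symm, hg]
      have h1 : Nat.card (orbit G x) = Nat.card α := by
        have : orbit G x = Set.univ :=
          Set.eq_univ_of_forall (fun y => MulAction.mem_orbit_iff.mpr (htrans x y))
        rw [this]
        exact Nat.card_congr (Equiv.Set.univ α)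
      have h2 : Nat.card (stabilizer G x) = 1 := by
        rw [Nat.card_eq_one_iff_unique]
        refine ⟨⟨fun a b => ?_⟩, ⟨1⟩⟩
        have ha := hstab a a.2
        have hb := hstab b b.2
        exact Subtype.ext (ha.trans hb.symm)
      have hcard : Nat.card G = Nat.card α := by
        calc Nat.card G = Nat.card (orbit G x × stabilizer G x) :=
              (Nat.card_congr (orbitProdStabilizerEquivGroup G x)).symm
          _ = Nat.card α := by rw [Nat.card_prod, h1, h2, mul_one]
      rw [hcard]
      exact le_two_pow_pred _
    · -- center not transitive: block argument
      set B := orbitRel.Quotient (Subgroup.center G) α with hBdef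
      set φ : G →* Equiv.Perm B := centralBlockHom with hφ
      set K := φ.ker with hK
      set H := φ.range with hH
      haveI : Group.IsNilpotent H := nilpotent_of_surjective _ φ.rangeRestrict_surjective
      haveI : Group.IsNilpotent K := Subgroup.isNilpotent K
      have hBne : Nonempty B := Nonempty.map (Quotient.mk'' ·) hα
      -- H acts transitively on B
      have hHtrans : ∀ p q : B, ∃ h : H, h • p = q := by
        intro p q
        induction p using Quotient.inductionOn'
        induction q using Quotient.inductionOn'
        rename_i a b
        obtain ⟨g, rfl⟩ := htrans a b
        exact ⟨⟨φ g, g, rfl⟩, rfl⟩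
      have htB : Nat.card (orbitRel.Quotient H B) = 1 := card_orbitQuot_eq_one hBne hHtrans
      -- B is smaller than α
      have hBlt : Nat.card B < Nat.card α := by
        obtain ⟨x0⟩ := hα
        have hfix : z0 • x0 ≠ x0 := fun h => hz0 (hfree z0 hz0c x0 h)
        haveI : Fintype α := Fintype.ofFinite α
        haveI : Fintype B := Fintype.ofFinite B
        rw [Nat.card_eq_fintype_card, Nat.card_eq_fintype_card]
        apply Fintype.card_lt_of_surjective_not_injective (Quotient.mk'' : α → B)
        · exact fun q => Quotient.inductionOn' q (fun a => ⟨a, rfl⟩)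
        · intro hinj
          apply hfix
          apply hinj
          apply Quotient.sound'
          rw [orbitRel_apply]
          exact ⟨⟨z0, hz0c⟩, rfl⟩
      -- B has at least 2 elements
      have hB2 : 2 ≤ Nat.card B := by
        push_neg at hZt
        obtain ⟨x1, y1, hxy1⟩ := hZt
        have hne : (Quotient.mk'' y1 : B) ≠ Quotient.mk'' x1 := by
          intro h
          rw [Quotient.eq'', orbitRel_apply] at h
          obtain ⟨z, hz⟩ := h
          exact hxy1 z hz
        haveI : Nontrivial B := ⟨_, _, hne⟩
        exact Finite.one_lt_card
      -- membership in K
      have hKmem : ∀ k : K, ∀ a : α, (orbitRel (Subgroup.center G) α) ((k : G) • a) a := by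
        rintro ⟨k, hk⟩ a
        have h1 : φ k = 1 := hk
        have h2 : φ k (Quotient.mk'' a) = Quotient.mk'' a := by rw [h1]; rfl
        have h3 : (Quotient.mk'' (k • a) : B) = Quotient.mk'' a := h2
        exact Quotient.exact' h3
      -- K has at least card B orbits
      have hmK : Nat.card B ≤ Nat.card (orbitRel.Quotient K α) := by
        apply Nat.card_le_card_of_surjective
          (fun q => Quotient.liftOn' q (Quotient.mk'' : α → B) ?_)
        · intro q
          induction q using Quotient.inductionOn'
          rename_i a
          exact ⟨Quotient.mk'' a, rfl⟩
        · intro a b hab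
          rw [orbitRel_apply] at hab
          obtain ⟨k, rfl⟩ := hab
          exact Quotient.sound' (hKmem k b)
      have htKle : Nat.card (orbitRel.Quotient K α) ≤ Nat.card α := card_orbitQuot_le
      -- |G| = |H| * |K|
      have hsplit : Nat.card G = Nat.card H * Nat.card K := by
        rw [Subgroup.card_eq_card_quotient_mul_card_subgroup K]
        congr 1
        exact Nat.card_congr (QuotientGroup.quotientKerEquivRange φ).toEquiv
      have hK1 : 1 ≤ Nat.card K := Nat.card_pos
      have hH2 : 2 ≤ Nat.card H := by
        haveI hBnt : Nontrivial B := Finite.one_lt_card_iff_nontrivial.mp hB2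
        obtain ⟨p, q, hpq⟩ := exists_pair_ne B
        obtain ⟨h, hh⟩ := hHtrans p q
        have : h ≠ 1 := by
          intro h1
          rw [h1, one_smul] at hh
          exact hpq hh
        haveI : Nontrivial H := ⟨h, 1, this⟩
        exact Finite.one_lt_card
      have hKlt : Nat.card K < Nat.card G := by
        calc Nat.card K < 2 * Nat.card K := by omega
          _ ≤ Nat.card H * Nat.card K := Nat.mul_le_mul_right _ hH2
          _ = Nat.card G := hsplit.symm
      have hHle : Nat.card H ≤ Nat.card G := card_range_le _
      -- recursive calls
      have hrecH : Nat.card H ≤ 2 ^ (Nat.card B - Nat.card (orbitRel.Quotient H B)) :=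
        IH (Nat.card B + Nat.card H) (by omega) B H inferInstance le_rfl
      have hrecK : Nat.card K ≤ 2 ^ (Nat.card α - Nat.card (orbitRel.Quotient K α)) :=
        IH (Nat.card α + Nat.card K) (by omega) α K inferInstance le_rfl
      rw [htB] at hrecH
      calc Nat.card G = Nat.card H * Nat.card K := hsplit
        _ ≤ 2 ^ (Nat.card B - 1) * 2 ^ (Nat.card α - Nat.card (orbitRel.Quotient K α)) :=
          Nat.mul_le_mul hrecH hrecK
        _ = 2 ^ ((Nat.card B - 1) + (Nat.card α - Nat.card (orbitRel.Quotient K α))) :=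
          (pow_add 2 _ _).symm
        _ ≤ 2 ^ (Nat.card α - 1) := by
          apply Nat.pow_le_pow_right (by norm_num)
          omega
  · -- intransitive case
    push_neg at htrans
    obtain ⟨x, y, hxy⟩ := htrans
    set O : Set α := orbit G x with hOdef
    have hOinv : ∀ (g : G) {a : α}, a ∈ O → g • a ∈ O := by
      intro g a ha
      obtain ⟨h, rfl⟩ := ha
      exact ⟨g * h, by simp [mul_smul]⟩
    have hxO : x ∈ O := mem_orbit_self x
    have hyO : y ∈ Oᶜ := by
      intro hy
      obtain ⟨g, hg⟩ := hy
      exact hxy g hg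
    set H1 := (restrictPermHom O hOinv).range with hH1
    set H2 := (restrictPermHom Oᶜ (invariant_compl O hOinv)).range with hH2
    haveI : Group.IsNilpotent H1 :=
      nilpotent_of_surjective _ (restrictPermHom O hOinv).rangeRestrict_surjective
    haveI : Group.IsNilpotent H2 :=
      nilpotent_of_surjective _
        (restrictPermHom Oᶜ (invariant_compl O hOinv)).rangeRestrict_surjective
    -- cardinalities of the two parts
    have hsum : Nat.card O + Nat.card (Oᶜ : Set α) = Nat.card α := by
      rw [Nat.card_coe_set_eq, Nat.card_coe_set_eq]
      exact Set.ncard_add_ncard_compl O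
    have hO1 : 1 ≤ Nat.card O := by
      haveI : Nonempty O := ⟨⟨x, hxO⟩⟩
      exact Nat.card_pos
    have hOc1 : 1 ≤ Nat.card (Oᶜ : Set α) := by
      haveI : Nonempty (Oᶜ : Set α) := ⟨⟨y, hyO⟩⟩
      exact Nat.card_pos
    -- orbit counts
    have ht12 := quot_card_le O hOinv
    rw [← hH1, ← hH2] at ht12
    have ht1 : Nat.card (orbitRel.Quotient H1 O) = 1 := by
      apply quot_card_eq_one O hOinv ⟨x, hxO⟩
      intro a b
      have ha : orbit G (a : α) = orbit G x := orbit_eq_iff.mpr a.2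
      have hb : (b : α) ∈ orbit G x := b.2
      rw [ha]
      exact hb
    have ht2 : Nat.card (orbitRel.Quotient H2 (Oᶜ : Set α)) ≤ Nat.card (Oᶜ : Set α) :=
      card_orbitQuot_le
    -- recursion
    have hH1le : Nat.card H1 ≤ Nat.card G := card_range_le _
    have hH2le : Nat.card H2 ≤ Nat.card G := card_range_le _
    have hrec1 : Nat.card H1 ≤ 2 ^ (Nat.card O - Nat.card (orbitRel.Quotient H1 O)) := by
      apply IH (Nat.card O + Nat.card H1) (by omega) O H1 inferInstance le_rfl
    have hrec2 : Nat.card H2 ≤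
        2 ^ (Nat.card (Oᶜ : Set α) - Nat.card (orbitRel.Quotient H2 (Oᶜ : Set α))) := by
      apply IH (Nat.card (Oᶜ : Set α) + Nat.card H2) (by omega) (Oᶜ : Set α) H2 inferInstance le_rfl
    have hmul := card_le_range_mul O hOinv (G := G)
    rw [← hH1, ← hH2] at hmul
    rw [ht1] at hrec1
    calc Nat.card G ≤ Nat.card H1 * Nat.card H2 := hmul
      _ ≤ 2 ^ (Nat.card O - 1) *
          2 ^ (Nat.card (Oᶜ : Set α) - Nat.card (orbitRel.Quotient H2 (Oᶜ : Set α))) :=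
        Nat.mul_le_mul hrec1 hrec2
      _ = 2 ^ ((Nat.card O - 1) +
          (Nat.card (Oᶜ : Set α) - Nat.card (orbitRel.Quotient H2 (Oᶜ : Set α)))) :=
        (pow_add 2 _ _).symm
      _ ≤ 2 ^ (Nat.card α - Nat.card (orbitRel.Quotient G α)) := by
        apply Nat.pow_le_pow_right (by norm_num)
        have := ht12
        rw [ht1] at this
        omega

/-- Any nilpotent permutation group of degree `n` has order at most `2^(n-1)`. -/
theorem nilpotent_perm_group_card_le_two_pow (n : ℕ) (hn : 1 ≤ n)
    (G : Subgroup (Equiv.Perm (Fin n))) (hnil : Group.IsNilpotent G) :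
    Nat.card G ≤ 2 ^ (n - 1) := by
  have h := key (Nat.card (Fin n) + Nat.card G) (Fin n) G hnil le_rfl
  have hcard : Nat.card (Fin n) = n := by simp
  rw [hcard] at h
  haveI : Nonempty (Fin n) := ⟨⟨0, hn⟩⟩
  have ht : 1 ≤ Nat.card (orbitRel.Quotient G (Fin n)) := by
    haveI : Nonempty (orbitRel.Quotient G (Fin n)) := Nonempty.map (Quotient.mk'' ·) ‹_›
    exact Nat.card_pos
  calc Nat.card G ≤ 2 ^ (n - Nat.card (orbitRel.Quotient G (Fin n))) := h
    _ ≤ 2 ^ (n - 1) := Nat.pow_le_pow_right (by norm_num) (by omega)
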